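/- Suppose that for every δ' ∈ (0,1) the function estimates satisfy P(‖f̂_R − f*_1‖_n ≤ ε₁(π_R, δ')) ≥ 1 − δ' and P(‖f̂_R̄ − f*_0‖_n ≤ ε₀(π_R̄, δ')) ≥ 1 − δ', where ‖f̂ − f*‖_n² = (1/n)·Σ_i (f̂(x_i) − f*(x_i))². Then for any δ ∈ (0,1), with probability at least 1 − δ, √n·|τ̂_dc − τ̂_dc.oracle| ≤ { ε₁(π_R, δ/4)/π_M + ε₀(π_R̄, δ/4)/π_M̄ }·√(log(4/δ)). -/

import Mathlib

open MeasureTheory ProbabilityTheory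
open scoped BigOperators

section AuxHoeffding
open Real


/-- Hoeffding's lemma, Bernoulli case. -/
lemma hoeffding_bernoulli (p : ℝ) (hp0 : 0 ≤ p) (hp1 : p ≤ 1) (s : ℝ) :
    p * exp (s * (1 - p)) + (1 - p) * exp (-(s * p)) ≤ exp (s ^ 2 / 8) := by
  rcases eq_or_lt_of_le hp0 with h0 | h0
  · simp only [← h0, zero_mul, sub_zero, mul_zero, neg_zero, exp_zero, zero_add, one_mul]
    exact one_le_exp (by positivity)
  rcases eq_or_lt_of_le hp1 with h1 | h1
  · simp only [h1, mul_one, sub_self, mul_zero, exp_zero, one_mul, zero_mul, add_zero]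
    exact one_le_exp (by positivity)
  set c : ℝ := 1 - p with hc
  have hcpos : 0 < c := by simp [hc]; linarith
  have hden : ∀ u : ℝ, 0 < c + p * exp u := fun u => by positivity
  -- F u = u * p + u^2/8 - log (c + p * exp u), F ≥ 0 everywhere
  set F : ℝ → ℝ := fun u => u * p + u ^ 2 / 8 - Real.log (c + p * exp u) with hF
  set G : ℝ → ℝ := fun u => p + u / 4 - p * exp u / (c + p * exp u) with hG
  have hFd : ∀ u, HasDerivAt F (G u) u := by
    intro u
    have h1' : HasDerivAt (fun v : ℝ => c + p * exp v) (p * exp u) u :=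
      ((Real.hasDerivAt_exp u).const_mul p).const_add c
    have h2' : HasDerivAt (fun v : ℝ => Real.log (c + p * exp v))
        (p * exp u / (c + p * exp u)) u := h1'.log (hden u).ne'
    have h3' : HasDerivAt (fun v : ℝ => v * p + v ^ 2 / 8)
        (p + u / 4) u := by
      have := ((hasDerivAt_id u).mul_const p).add
        (((hasDerivAt_pow 2 u)).div_const 8)
      exact this.congr_deriv (by norm_num; ring)
    exact h3'.sub h2'
  have hGd : ∀ u, HasDerivAt G (1 / 4 - c * p * exp u / (c + p * exp u) ^ 2) u := by
    intro u
    have h1' : HasDerivAt (fun v : ℝ => c + p * exp v) (p * exp u) u :=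
      ((Real.hasDerivAt_exp u).const_mul p).const_add c
    have h2' : HasDerivAt (fun v : ℝ => p * exp v) (p * exp u) u :=
      (Real.hasDerivAt_exp u).const_mul p
    have hq : HasDerivAt (fun v : ℝ => p * exp v / (c + p * exp v))
        ((p * exp u * (c + p * exp u) - p * exp u * (p * exp u)) / (c + p * exp u) ^ 2) u :=
      h2'.div h1' (hden u).ne'
    have h3' : HasDerivAt (fun v : ℝ => p + v / 4) (1 / 4) u := by
      simpa using ((hasDerivAt_id u).div_const 4).const_add p
    have := h3'.sub hq
    have h4 := (hden u).ne'
    refine this.congr_deriv ?_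
    field_simp
    ring
  have hGderiv_nonneg : ∀ u, 0 ≤ 1 / 4 - c * p * exp u / (c + p * exp u) ^ 2 := by
    intro u
    have hx : 0 < p * exp u := by positivity
    have key : 4 * (c * (p * exp u)) ≤ (c + p * exp u) ^ 2 := by nlinarith [sq_nonneg (c - p * exp u)]
    rw [sub_nonneg, div_le_iff₀ (by positivity)]
    nlinarith
  have hGmono : Monotone G := by
    have : ∀ u, 0 ≤ deriv G u := fun u => by rw [(hGd u).deriv]; exact hGderiv_nonneg u
    exact monotone_of_deriv_nonneg (fun u => (hGd u).differentiableAt) this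
  have hG0 : G 0 = 0 := by
    simp only [hG, exp_zero, mul_one]
    have : c + p = 1 := by simp [hc]
    rw [this]
    ring
  have hF0 : F 0 = 0 := by
    simp only [hF, exp_zero, mul_one]
    have : c + p = 1 := by simp [hc]
    rw [this, Real.log_one]
    ring
  have hFnonneg : ∀ u, 0 ≤ F u := by
    intro u
    rcases le_total 0 u with hu | hu
    · have hmono : MonotoneOn F (Set.Ici (0 : ℝ)) := by
        apply monotoneOn_of_deriv_nonneg (convex_Ici 0)
          (fun v _ => ((hFd v).differentiableAt).continuousAt.continuousWithinAt)
          (fun v _ => ((hFd v).differentiableAt).differentiableWithinAt)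
        intro v hv
        rw [(hFd v).deriv]
        rw [interior_Ici] at hv
        have : G 0 ≤ G v := hGmono (le_of_lt hv)
        linarith [hG0 ▸ this]
      have := hmono (Set.self_mem_Ici) hu hu
      linarith [hF0 ▸ this]
    · have hmono : AntitoneOn F (Set.Iic (0 : ℝ)) := by
        apply antitoneOn_of_deriv_nonpos (convex_Iic 0)
          (fun v _ => ((hFd v).differentiableAt).continuousAt.continuousWithinAt)
          (fun v _ => ((hFd v).differentiableAt).differentiableWithinAt)
        intro v hv
        rw [(hFd v).deriv]
        rw [interior_Iic] at hv
        have : G v ≤ G 0 := hGmono (le_of_lt hv)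
        linarith [hG0 ▸ this]
      have := hmono hu (Set.self_mem_Iic) hu
      linarith [hF0 ▸ this]
  -- conclude
  have hlog : Real.log (c + p * exp s) ≤ s * p + s ^ 2 / 8 := by
    have := hFnonneg s
    simp only [hF] at this
    linarith
  have h5 : c + p * exp s ≤ exp (s * p + s ^ 2 / 8) := by
    rw [← Real.exp_log (hden s)]
    exact exp_le_exp.mpr hlog
  have expand : p * exp (s * (1 - p)) + (1 - p) * exp (-(s * p))
      = exp (-(s * p)) * (c + p * exp s) := by
    rw [hc]
    rw [show s * (1 - p) = s + -(s * p) by ring, Real.exp_add]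
    ring
  rw [expand]
  calc exp (-(s * p)) * (c + p * exp s) ≤ exp (-(s * p)) * exp (s * p + s ^ 2 / 8) :=
        by apply mul_le_mul_of_nonneg_left h5 (exp_nonneg _)
    _ = exp (s ^ 2 / 8) := by rw [← Real.exp_add]; ring_nf



section Bern
variable {Ω : Type*} [MeasurableSpace Ω] (P : Measure Ω) [IsProbabilityMeasure P]

lemma bern_repr (M : Ω → ℝ) (hM01 : ∀ ω, M ω = 0 ∨ M ω = 1) (p r : ℝ) :
    (fun ω => exp (r * (M ω - p)))
      = fun ω => exp (-(r * p)) +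
          Set.indicator {ω | M ω = 1} (fun _ => exp (r * (1 - p)) - exp (-(r * p))) ω := by
  funext ω
  rcases hM01 ω with h | h
  · rw [Set.indicator_of_notMem (by simp [Set.mem_setOf_eq, h])]
    rw [h]; ring_nf
  · rw [Set.indicator_of_mem (by simp [Set.mem_setOf_eq, h])]
    rw [h]; ring_nf

lemma bern_integrable (M : Ω → ℝ) (hM : Measurable M) (hM01 : ∀ ω, M ω = 0 ∨ M ω = 1)
    (p r : ℝ) : Integrable (fun ω => exp (r * (M ω - p))) P := by
  have hset : MeasurableSet {ω | M ω = 1} := hM (measurableSet_singleton 1)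
  rw [bern_repr M hM01 p r]
  exact (integrable_const _).add ((integrable_const _).indicator hset)

lemma bern_integral (M : Ω → ℝ) (hM : Measurable M) (hM01 : ∀ ω, M ω = 0 ∨ M ω = 1)
    (p : ℝ) (hp0 : 0 ≤ p) (hMp : P {ω | M ω = 1} = ENNReal.ofReal p) (r : ℝ) :
    ∫ ω, exp (r * (M ω - p)) ∂P = p * exp (r * (1 - p)) + (1 - p) * exp (-(r * p)) := by
  have hset : MeasurableSet {ω | M ω = 1} := hM (measurableSet_singleton 1)
  rw [bern_repr M hM01 p r]
  rw [integral_add (integrable_const _) ((integrable_const _).indicator hset)]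
  rw [integral_const, integral_indicator hset, setIntegral_const]
  simp only [measureReal_def, measure_univ, ENNReal.toReal_one, one_smul, hMp,
    ENNReal.toReal_ofReal hp0, smul_eq_mul]
  ring

end Bern

lemma hoeffding_tail {Ω : Type*} [MeasurableSpace Ω] (P : Measure Ω) [IsProbabilityMeasure P]
    {n : ℕ} (M : Fin n → Ω → ℝ) (hMmeas : ∀ i, Measurable (M i))
    (hM01 : ∀ i ω, M i ω = 0 ∨ M i ω = 1) (p : ℝ) (hp0 : 0 ≤ p) (hp1 : p ≤ 1)
    (hMp : ∀ i, P {ω | M i ω = 1} = ENNReal.ofReal p)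
    (hindep : iIndepFun M P)
    (a : Fin n → ℝ) (ε : ℝ) (hε : 0 ≤ ε) (hQ : 0 < ∑ i, a i ^ 2) :
    P {ω | ε ≤ ∑ i, a i * (M i ω - p)} ≤
      ENNReal.ofReal (exp (-2 * ε ^ 2 / ∑ i, a i ^ 2)) := by
  set Q : ℝ := ∑ i, a i ^ 2 with hQdef
  set X : Fin n → Ω → ℝ := fun i ω => a i * (M i ω - p) with hX
  have hXmeas : ∀ i, Measurable (X i) := fun i =>
    ((hMmeas i).sub measurable_const).const_mul (a i)
  have hXindep : iIndepFun X P := by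
    have := hindep.comp (fun i v => a i * (v - p))
      (fun i => (measurable_id.sub measurable_const).const_mul (a i))
    exact this
  set t : ℝ := 4 * ε / Q with ht_def
  have ht : 0 ≤ t := by positivity
  have hint : ∀ i, Integrable (fun ω => exp (t * X i ω)) P := by
    intro i
    have := bern_integrable P (M i) (hMmeas i) (hM01 i) p (t * a i)
    simpa [hX, mul_assoc] using this
  have hintsum : Integrable (fun ω => exp (t * (∑ i, X i) ω)) P :=
    hXindep.integrable_exp_mul_sum hXmeas (fun i _ => hint i)
  have chernoff := measure_ge_le_exp_mul_mgf (μ := P) (X := ∑ i, X i) ε ht hintsum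
  have hmgf : mgf (∑ i, X i) P t ≤ exp (t ^ 2 * Q / 8) := by
    rw [hXindep.mgf_sum hXmeas Finset.univ]
    have heach : ∀ i ∈ Finset.univ, mgf (X i) P t ≤ exp ((t * a i) ^ 2 / 8) := by
      intro i _
      have hcalc : mgf (X i) P t = ∫ ω, exp ((t * a i) * (M i ω - p)) ∂P := by
        unfold mgf
        congr 1
        funext ω
        simp [hX]; ring_nf
      rw [hcalc, bern_integral P (M i) (hMmeas i) (hM01 i) p hp0 (hMp i) (t * a i)]
      exact hoeffding_bernoulli p hp0 hp1 (t * a i)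
    calc ∏ i, mgf (X i) P t ≤ ∏ i, exp ((t * a i) ^ 2 / 8) :=
          Finset.prod_le_prod (fun i _ => mgf_nonneg) heach
      _ = exp (∑ i, (t * a i) ^ 2 / 8) := by rw [Real.exp_sum]
      _ = exp (t ^ 2 * Q / 8) := by
          congr 1
          rw [hQdef, Finset.mul_sum, Finset.sum_div]
          exact Finset.sum_congr rfl fun i _ => by ring
  have hfinal : exp (-t * ε) * exp (t ^ 2 * Q / 8) = exp (-2 * ε ^ 2 / Q) := by
    rw [← Real.exp_add]
    congr 1
    rw [ht_def]
    field_simp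
    ring
  have hsets : {ω | ε ≤ ∑ i, a i * (M i ω - p)} = {ω | ε ≤ (∑ i, X i) ω} := by
    ext ω; simp [hX]
  rw [hsets]
  have h1 : (P {ω | ε ≤ (∑ i, X i) ω}).toReal ≤ exp (-2 * ε ^ 2 / Q) := by
    calc (P {ω | ε ≤ (∑ i, X i) ω}).toReal ≤ exp (-t * ε) * mgf (∑ i, X i) P t := chernoff
      _ ≤ exp (-t * ε) * exp (t ^ 2 * Q / 8) :=
          mul_le_mul_of_nonneg_left hmgf (exp_nonneg _)
      _ = exp (-2 * ε ^ 2 / Q) := hfinal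
  rw [← ENNReal.ofReal_toReal (measure_ne_top P _)]
  exact ENNReal.ofReal_le_ofReal h1


lemma indep_fubini_bound {Ω : Type*} [MeasurableSpace Ω] (P : Measure Ω)
    [IsProbabilityMeasure P] {n : ℕ} (V W : Ω → Fin n → ℝ)
    (hV : Measurable V) (hW : Measurable W) (hVW : IndepFun V W P)
    (S : Set ((Fin n → ℝ) × (Fin n → ℝ))) (hS : MeasurableSet S)
    (K : ENNReal) (hK : ∀ g, P {ω | (g, W ω) ∈ S} ≤ K) :
    P {ω | (V ω, W ω) ∈ S} ≤ K := by
  have hmap : P.map (fun ω => (V ω, W ω)) = (P.map V).prod (P.map W) :=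
    (indepFun_iff_map_prod_eq_prod_map_map hV.aemeasurable hW.aemeasurable).mp hVW
  have h1 : P {ω | (V ω, W ω) ∈ S} = P.map (fun ω => (V ω, W ω)) S := by
    rw [Measure.map_apply (hV.prodMk hW) hS]; rfl
  rw [h1, hmap, Measure.prod_apply hS]
  have h2 : ∀ g, P.map W (Prod.mk g ⁻¹' S) ≤ K := by
    intro g
    rw [Measure.map_apply hW (measurable_prodMk_left hS)]
    exact hK g
  calc ∫⁻ g, P.map W (Prod.mk g ⁻¹' S) ∂(P.map V) ≤ ∫⁻ _, K ∂(P.map V) :=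
        lintegral_mono h2
    _ = K := by
        have : IsProbabilityMeasure (P.map V) := Measure.isProbabilityMeasure_map hV.aemeasurable
        simp

lemma concentration_event {Ω : Type*} [MeasurableSpace Ω] (P : Measure Ω)
    [IsProbabilityMeasure P] {n : ℕ} (hn : 0 < n)
    (M : Fin n → Ω → ℝ) (hMmeas : ∀ i, Measurable (M i))
    (hM01 : ∀ i ω, M i ω = 0 ∨ M i ω = 1) (p : ℝ) (hp0 : 0 ≤ p) (hp1 : p ≤ 1)
    (hMp : ∀ i, P {ω | M i ω = 1} = ENNReal.ofReal p)
    (hMindep : iIndepFun M P)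
    (V : Ω → Fin n → ℝ) (hV : Measurable V)
    (hVW : IndepFun V (fun ω (i : Fin n) => M i ω) P)
    (c : Fin n → ℝ) (e L : ℝ) (he : 0 ≤ e) (hL : 0 ≤ L) :
    P {ω | Real.sqrt ((1 / (n : ℝ)) * ∑ i, (V ω i - c i) ^ 2) ≤ e ∧
        Real.sqrt n * e * Real.sqrt L < |∑ i, (V ω i - c i) * (M i ω - p)|}
      ≤ 2 * ENNReal.ofReal (Real.exp (-2 * L)) := by
  have hn' : (0 : ℝ) < n := by exact_mod_cast hn
  set t1 : ℝ := Real.sqrt n * e * Real.sqrt L with ht1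
  have ht1nonneg : 0 ≤ t1 := by positivity
  set W : Ω → Fin n → ℝ := fun ω i => M i ω with hWdef
  have hW : Measurable W := measurable_pi_lambda _ fun i => hMmeas i
  set S : Set ((Fin n → ℝ) × (Fin n → ℝ)) :=
    {q | Real.sqrt ((1 / (n : ℝ)) * ∑ i, (q.1 i - c i) ^ 2) ≤ e ∧
        t1 < |∑ i, (q.1 i - c i) * (q.2 i - p)|} with hSdef
  have hF1 : Measurable fun q : (Fin n → ℝ) × (Fin n → ℝ) =>
      Real.sqrt ((1 / (n : ℝ)) * ∑ i, (q.1 i - c i) ^ 2) := by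
    apply Real.continuous_sqrt.measurable.comp
    apply Measurable.const_mul
    exact Finset.measurable_sum _ fun i _ =>
      (((measurable_pi_apply i).comp measurable_fst).sub measurable_const).pow_const 2
  have hF2 : Measurable fun q : (Fin n → ℝ) × (Fin n → ℝ) =>
      |∑ i, (q.1 i - c i) * (q.2 i - p)| := by
    apply (Finset.measurable_sum _ fun i _ => Measurable.mul
      (((measurable_pi_apply i).comp measurable_fst).sub measurable_const)
      (((measurable_pi_apply i).comp measurable_snd).sub measurable_const)).abs
  have hS : MeasurableSet S :=
    (hF1 measurableSet_Iic).inter (hF2 measurableSet_Ioi)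
  have hset : {ω | Real.sqrt ((1 / (n : ℝ)) * ∑ i, (V ω i - c i) ^ 2) ≤ e ∧
      t1 < |∑ i, (V ω i - c i) * (M i ω - p)|} = {ω | (V ω, W ω) ∈ S} := rfl
  rw [hset]
  apply indep_fubini_bound P V W hV hW hVW S hS
  intro g
  set a : Fin n → ℝ := fun i => g i - c i with ha
  by_cases hcg : Real.sqrt ((1 / (n : ℝ)) * ∑ i, (g i - c i) ^ 2) ≤ e
  swap
  · have : {ω | (g, W ω) ∈ S} = ∅ := by
      ext ω; simp only [hSdef, Set.mem_setOf_eq, Set.mem_empty_iff_false, iff_false]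
      exact fun h => hcg h.1
    simp [this]
  · -- from the ball condition, ∑ a i ^ 2 ≤ n * e ^ 2
    have hz : (0 : ℝ) ≤ (1 / (n : ℝ)) * ∑ i, (g i - c i) ^ 2 := by positivity
    have hz2 : (1 / (n : ℝ)) * ∑ i, (g i - c i) ^ 2 ≤ e ^ 2 := by
      have := Real.sq_sqrt hz
      nlinarith [Real.sqrt_nonneg ((1 / (n : ℝ)) * ∑ i, (g i - c i) ^ 2)]
    have hQle : ∑ i, a i ^ 2 ≤ (n : ℝ) * e ^ 2 := by
      have : ∑ i, a i ^ 2 = (n : ℝ) * ((1 / (n : ℝ)) * ∑ i, (g i - c i) ^ 2) := by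
        field_simp [ha]
        rfl
      rw [this]
      exact (mul_le_mul_of_nonneg_left hz2 hn'.le)
    have hQnonneg : (0 : ℝ) ≤ ∑ i, a i ^ 2 :=
      Finset.sum_nonneg fun i _ => sq_nonneg _
    rcases eq_or_lt_of_le hQnonneg with hQ0 | hQpos
    · -- all weights zero: the event is empty
      have hai : ∀ i, a i = 0 := by
        intro i
        have := (Finset.sum_eq_zero_iff_of_nonneg (fun i _ => sq_nonneg (a i))).mp hQ0.symm
          i (Finset.mem_univ i)
        exact pow_eq_zero_iff (two_ne_zero)|>.mp this
      have : {ω | (g, W ω) ∈ S} = ∅ := by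
        ext ω
        simp only [hSdef, Set.mem_setOf_eq, Set.mem_empty_iff_false, iff_false, not_and]
        intro _
        have : ∑ i, (g i - c i) * (M i ω - p) = 0 :=
          Finset.sum_eq_zero fun i _ => by rw [show g i - c i = a i from rfl, hai i, zero_mul]
        rw [this]
        simpa using ht1nonneg
      simp [this]
    · -- apply the two-sided Hoeffding bound
      have hsub : {ω | (g, W ω) ∈ S} ⊆
          {ω | t1 ≤ ∑ i, a i * (M i ω - p)} ∪
            {ω | t1 ≤ ∑ i, (-a i) * (M i ω - p)} := by
        intro ω hω
        have habs : t1 < |∑ i, a i * (M i ω - p)| := hω.2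
        rcases lt_abs.mp habs with h | h
        · exact Or.inl h.le
        · refine Or.inr ?_
          have : ∑ i, (-a i) * (M i ω - p) = -∑ i, a i * (M i ω - p) := by
            rw [← Finset.sum_neg_distrib]
            exact Finset.sum_congr rfl fun i _ => by ring
          show t1 ≤ ∑ i, (-a i) * (M i ω - p)
          rw [this]
          exact h.le
      have htail : ∀ b : Fin n → ℝ, (∑ i, b i ^ 2) = ∑ i, a i ^ 2 →
          P {ω | t1 ≤ ∑ i, b i * (M i ω - p)} ≤ ENNReal.ofReal (Real.exp (-2 * L)) := by
        intro b hbQ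
        have h := hoeffding_tail P M hMmeas hM01 p hp0 hp1 hMp hMindep b t1 ht1nonneg
          (hbQ ▸ hQpos)
        refine h.trans (ENNReal.ofReal_le_ofReal (Real.exp_le_exp.mpr ?_))
        rw [hbQ]
        have ht1sq : t1 ^ 2 = (n : ℝ) * e ^ 2 * L := by
          rw [ht1]
          rw [mul_pow, mul_pow, Real.sq_sqrt hn'.le, Real.sq_sqrt hL]
        have hLle : L ≤ t1 ^ 2 / ∑ i, a i ^ 2 := by
          rw [le_div_iff₀ hQpos, ht1sq]
          calc L * ∑ i, a i ^ 2 = (∑ i, a i ^ 2) * L := by ring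
            _ ≤ ((n : ℝ) * e ^ 2) * L := mul_le_mul_of_nonneg_right hQle hL
            _ = (n : ℝ) * e ^ 2 * L := by ring
        have : -2 * (t1 ^ 2 / ∑ i, a i ^ 2) ≤ -2 * L := by linarith
        calc -2 * t1 ^ 2 / ∑ i, a i ^ 2 = -2 * (t1 ^ 2 / ∑ i, a i ^ 2) := by ring
          _ ≤ -2 * L := this
      calc P {ω | (g, W ω) ∈ S}
          ≤ P ({ω | t1 ≤ ∑ i, a i * (M i ω - p)} ∪
              {ω | t1 ≤ ∑ i, (-a i) * (M i ω - p)}) := measure_mono hsub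
        _ ≤ P {ω | t1 ≤ ∑ i, a i * (M i ω - p)} +
              P {ω | t1 ≤ ∑ i, (-a i) * (M i ω - p)} := measure_union_le _ _
        _ ≤ ENNReal.ofReal (Real.exp (-2 * L)) + ENNReal.ofReal (Real.exp (-2 * L)) :=
              add_le_add (htail a rfl) (htail (fun i => -a i) (by simp))
        _ = 2 * ENNReal.ofReal (Real.exp (-2 * L)) := by rw [two_mul]

end AuxHoeffding

/-- Theorem 1 of the paper: non-asymptotic bound on the difference
between the decorrelated estimator and its oracle version; `f̂_R` (resp. `f̂_R̄`) is
represented by the random vector of its fitted values at the design points, and it is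
independent of `(M_i)_i` (resp. `(M̄_i)_i`). -/
theorem dc_vs_oracle_nonasymptotic
    {Ω : Type*} [MeasurableSpace Ω] (P : Measure Ω) [IsProbabilityMeasure P]
    (n d : ℕ) (hn : 0 < n)
    (πT πR πM πRb πMb : ℝ)
    (hπT : πT ∈ Set.Ioo (0 : ℝ) 1) (hπR : πR ∈ Set.Ioo (0 : ℝ) 1)
    (hπM : πM ∈ Set.Ioo (0 : ℝ) 1) (hπRb : πRb ∈ Set.Ioo (0 : ℝ) 1)
    (hπMb : πMb ∈ Set.Ioo (0 : ℝ) 1)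
    (y1 y0 : Fin n → ℝ) (x : Fin n → Fin d → ℝ)
    (f1 f0 : (Fin d → ℝ) → ℝ)
    -- the decorrelating quadruples, coupled with the treatment indicators
    (T R M Rb Mb : Fin n → Ω → ℝ)
    (hTmeas : ∀ i, Measurable (T i)) (hRmeas : ∀ i, Measurable (R i))
    (hMmeas : ∀ i, Measurable (M i)) (hRbmeas : ∀ i, Measurable (Rb i))
    (hMbmeas : ∀ i, Measurable (Mb i))
    (hT01 : ∀ i ω, T i ω = 0 ∨ T i ω = 1) (hR01 : ∀ i ω, R i ω = 0 ∨ R i ω = 1)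
    (hM01 : ∀ i ω, M i ω = 0 ∨ M i ω = 1) (hRb01 : ∀ i ω, Rb i ω = 0 ∨ Rb i ω = 1)
    (hMb01 : ∀ i ω, Mb i ω = 0 ∨ Mb i ω = 1)
    (hTber : ∀ i, P {ω | T i ω = 1} = ENNReal.ofReal πT)
    (hRber : ∀ i, P {ω | R i ω = 1} = ENNReal.ofReal πR)
    (hMber : ∀ i, P {ω | M i ω = 1} = ENNReal.ofReal πM)
    (hRbber : ∀ i, P {ω | Rb i ω = 1} = ENNReal.ofReal πRb)
    (hMbber : ∀ i, P {ω | Mb i ω = 1} = ENNReal.ofReal πMb)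
    (hRM : ∀ i, IndepFun (R i) (M i) P)
    (hRbMb : ∀ i, IndepFun (Rb i) (Mb i) P)
    (hrel : πT = πM + πR - πM * πR)
    (hrelb : 1 - πT = πMb + πRb - πMb * πRb)
    (hcouple : ∀ i ω, max (R i ω) (M i ω) ≤ T i ω ∧ max (Rb i ω) (Mb i ω) ≤ 1 - T i ω)
    (hiid : iIndepFun
      (fun i ω => (T i ω, R i ω, M i ω, Rb i ω, Mb i ω)) P)
    -- observed outcomes
    (Y : Fin n → Ω → ℝ)
    (hY : ∀ i ω, Y i ω = if T i ω = 1 then y1 i else y0 i)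
    -- the fitted functions (as random vectors of fitted values at the design points),
    -- each independent of the corresponding averaging indicators
    (fhatR fhatRb : Ω → Fin n → ℝ)
    (hfhatRmeas : Measurable fhatR) (hfhatRbmeas : Measurable fhatRb)
    (hfhatR_indep : IndepFun fhatR (fun ω (i : Fin n) => M i ω) P)
    (hfhatRb_indep : IndepFun fhatRb (fun ω (i : Fin n) => Mb i ω) P)
    -- high-probability error functions for the two regression estimates
    (ε1 ε0 : ℝ → ℝ → ℝ)
    (herr1 : ∀ δ' ∈ Set.Ioo (0 : ℝ) 1,
      ENNReal.ofReal (1 - δ') ≤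
        P {ω | Real.sqrt ((1 / (n : ℝ)) * ∑ i, (fhatR ω i - f1 (x i)) ^ 2) ≤ ε1 πR δ'})
    (herr0 : ∀ δ' ∈ Set.Ioo (0 : ℝ) 1,
      ENNReal.ofReal (1 - δ') ≤
        P {ω | Real.sqrt ((1 / (n : ℝ)) * ∑ i, (fhatRb ω i - f0 (x i)) ^ 2) ≤ ε0 πRb δ'})
    -- the decorrelated estimator and its oracle version
    (τdc τora : Ω → ℝ)
    (hτdc : ∀ ω, τdc ω =
      (1 / ((n : ℝ) * πM)) * ∑ i, (Y i ω - fhatR ω i) * M i ω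
        - (1 / ((n : ℝ) * πMb)) * ∑ i, (Y i ω - fhatRb ω i) * Mb i ω
        + (1 / (n : ℝ)) * ∑ i, (fhatR ω i - fhatRb ω i))
    (hτora : ∀ ω, τora ω =
      (1 / ((n : ℝ) * πM)) * ∑ i, (Y i ω - f1 (x i)) * M i ω
        - (1 / ((n : ℝ) * πMb)) * ∑ i, (Y i ω - f0 (x i)) * Mb i ω
        + (1 / (n : ℝ)) * ∑ i, (f1 (x i) - f0 (x i)))
    (δ : ℝ) (hδ : δ ∈ Set.Ioo (0 : ℝ) 1) :
    ENNReal.ofReal (1 - δ) ≤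
      P {ω | Real.sqrt (n : ℝ) * |τdc ω - τora ω| ≤
        (ε1 πR (δ / 4) / πM + ε0 πRb (δ / 4) / πMb) * Real.sqrt (Real.log (4 / δ))} := by
  classical
  obtain ⟨hδ0, hδ1⟩ := hδ
  have hn' : (0 : ℝ) < n := by exact_mod_cast hn
  have hnne : (n : ℝ) ≠ 0 := hn'.ne'
  have hπMne : πM ≠ 0 := hπM.1.ne'
  have hπMbne : πMb ≠ 0 := hπMb.1.ne'
  have hδ4 : δ / 4 ∈ Set.Ioo (0 : ℝ) 1 := ⟨by linarith, by linarith⟩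
  set e1 : ℝ := ε1 πR (δ / 4) with he1def
  set e0 : ℝ := ε0 πRb (δ / 4) with he0def
  set L : ℝ := Real.log (4 / δ) with hLdef
  have h4δ : (0 : ℝ) < 4 / δ := by positivity
  have hL : 0 ≤ L := Real.log_nonneg (by rw [le_div_iff₀ hδ0]; linarith)
  -- the error levels are nonnegative
  have hofpos : (0 : ENNReal) < ENNReal.ofReal (1 - δ / 4) := by
    rw [ENNReal.ofReal_pos]; linarith
  have he1 : 0 ≤ e1 := by
    by_contra h
    push_neg at h
    have hemp : {ω | Real.sqrt ((1 / (n : ℝ)) * ∑ i, (fhatR ω i - f1 (x i)) ^ 2) ≤ e1} = ∅ := by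
      ext ω
      simp only [Set.mem_setOf_eq, Set.mem_empty_iff_false, iff_false, not_le]
      exact lt_of_lt_of_le h (Real.sqrt_nonneg _)
    have := herr1 (δ / 4) hδ4
    rw [← he1def, hemp] at this
    simp only [measure_empty, nonpos_iff_eq_zero] at this
    exact absurd this hofpos.ne'
  have he0 : 0 ≤ e0 := by
    by_contra h
    push_neg at h
    have hemp : {ω | Real.sqrt ((1 / (n : ℝ)) * ∑ i, (fhatRb ω i - f0 (x i)) ^ 2) ≤ e0} = ∅ := by
      ext ω
      simp only [Set.mem_setOf_eq, Set.mem_empty_iff_false, iff_false, not_le]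
      exact lt_of_lt_of_le h (Real.sqrt_nonneg _)
    have := herr0 (δ / 4) hδ4
    rw [← he0def, hemp] at this
    simp only [measure_empty, nonpos_iff_eq_zero] at this
    exact absurd this hofpos.ne'
  -- independence of the averaging indicators across units
  have hMindep : iIndepFun M P := by
    have := hiid.comp (fun _ (q : ℝ × ℝ × ℝ × ℝ × ℝ) => q.2.2.1)
      (fun _ => measurable_fst.comp (measurable_snd.comp measurable_snd))
    exact this
  have hMbindep : iIndepFun Mb P := by
    have := hiid.comp (fun _ (q : ℝ × ℝ × ℝ × ℝ × ℝ) => q.2.2.2.2)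
      (fun _ => measurable_snd.comp (measurable_snd.comp (measurable_snd.comp measurable_snd)))
    exact this
  -- measurability
  have hYm : ∀ i, Measurable (Y i) := by
    intro i
    have h : Y i = fun ω => if T i ω = 1 then y1 i else y0 i := funext fun ω => hY i ω
    rw [h]
    exact Measurable.ite ((hTmeas i) (measurableSet_singleton 1))
      measurable_const measurable_const
  have hfRm : ∀ i : Fin n, Measurable fun ω => fhatR ω i :=
    fun i => (measurable_pi_apply i).comp hfhatRmeas
  have hfRbm : ∀ i : Fin n, Measurable fun ω => fhatRb ω i :=
    fun i => (measurable_pi_apply i).comp hfhatRbmeas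
  have hτdcm : Measurable τdc := by
    have h : τdc = fun ω =>
        (1 / ((n : ℝ) * πM)) * ∑ i, (Y i ω - fhatR ω i) * M i ω
          - (1 / ((n : ℝ) * πMb)) * ∑ i, (Y i ω - fhatRb ω i) * Mb i ω
          + (1 / (n : ℝ)) * ∑ i, (fhatR ω i - fhatRb ω i) := funext fun ω => hτdc ω
    rw [h]
    refine Measurable.add (Measurable.sub ?_ ?_) ?_
    · exact (Finset.measurable_sum _ fun i _ =>
        ((hYm i).sub (hfRm i)).mul (hMmeas i)).const_mul _
    · exact (Finset.measurable_sum _ fun i _ =>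
        ((hYm i).sub (hfRbm i)).mul (hMbmeas i)).const_mul _
    · exact (Finset.measurable_sum _ fun i _ => (hfRm i).sub (hfRbm i)).const_mul _
  have hτoram : Measurable τora := by
    have h : τora = fun ω =>
        (1 / ((n : ℝ) * πM)) * ∑ i, (Y i ω - f1 (x i)) * M i ω
          - (1 / ((n : ℝ) * πMb)) * ∑ i, (Y i ω - f0 (x i)) * Mb i ω
          + (1 / (n : ℝ)) * ∑ i, (f1 (x i) - f0 (x i)) := funext fun ω => hτora ω
    rw [h]
    refine Measurable.add (Measurable.sub ?_ ?_) ?_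
    · exact (Finset.measurable_sum _ fun i _ =>
        ((hYm i).sub measurable_const).mul (hMmeas i)).const_mul _
    · exact (Finset.measurable_sum _ fun i _ =>
        ((hYm i).sub measurable_const).mul (hMbmeas i)).const_mul _
    · exact measurable_const
  -- the key algebraic identity
  have key : ∀ ω, τdc ω - τora ω =
      (-(1 / ((n : ℝ) * πM))) * (∑ i, (fhatR ω i - f1 (x i)) * (M i ω - πM))
        + (1 / ((n : ℝ) * πMb)) * (∑ i, (fhatRb ω i - f0 (x i)) * (Mb i ω - πMb)) := by
    intro ω
    rw [hτdc ω, hτora ω]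
    have hrearr : ∀ u v w p q r : ℝ,
        (u - v + w) - (p - q + r) = (u - p) + ((q - v) + (w - r)) := fun _ _ _ _ _ _ => by ring
    rw [hrearr]
    simp only [Finset.mul_sum, neg_mul, ← Finset.sum_neg_distrib, ← Finset.sum_sub_distrib,
      ← Finset.sum_add_distrib]
    apply Finset.sum_congr rfl
    intro i _
    field_simp
    ring
  -- the four events
  set E1 : Set Ω :=
    {ω | Real.sqrt ((1 / (n : ℝ)) * ∑ i, (fhatR ω i - f1 (x i)) ^ 2) ≤ e1} with hE1def
  set E0 : Set Ω :=
    {ω | Real.sqrt ((1 / (n : ℝ)) * ∑ i, (fhatRb ω i - f0 (x i)) ^ 2) ≤ e0} with hE0def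
  set C1 : Set Ω :=
    {ω | Real.sqrt ((1 / (n : ℝ)) * ∑ i, (fhatR ω i - f1 (x i)) ^ 2) ≤ e1 ∧
      Real.sqrt n * e1 * Real.sqrt L <
        |∑ i, (fhatR ω i - f1 (x i)) * (M i ω - πM)|} with hC1def
  set C0 : Set Ω :=
    {ω | Real.sqrt ((1 / (n : ℝ)) * ∑ i, (fhatRb ω i - f0 (x i)) ^ 2) ≤ e0 ∧
      Real.sqrt n * e0 * Real.sqrt L <
        |∑ i, (fhatRb ω i - f0 (x i)) * (Mb i ω - πMb)|} with hC0def
  have hE1m : MeasurableSet E1 := by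
    apply measurableSet_le ?_ measurable_const
    exact Real.continuous_sqrt.measurable.comp ((Finset.measurable_sum _ fun i _ =>
      ((hfRm i).sub measurable_const).pow_const 2).const_mul _)
  have hE0m : MeasurableSet E0 := by
    apply measurableSet_le ?_ measurable_const
    exact Real.continuous_sqrt.measurable.comp ((Finset.measurable_sum _ fun i _ =>
      ((hfRbm i).sub measurable_const).pow_const 2).const_mul _)
  have hsub14 : (0:ℝ) ≤ 1 - δ / 4 := by linarith
  have hPE1c : P E1ᶜ ≤ ENNReal.ofReal (δ / 4) := by
    have h := herr1 (δ / 4) hδ4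
    calc P E1ᶜ = 1 - P E1 := prob_compl_eq_one_sub hE1m
      _ ≤ 1 - ENNReal.ofReal (1 - δ / 4) := tsub_le_tsub_left h 1
      _ = ENNReal.ofReal (δ / 4) := by
          rw [← ENNReal.ofReal_one, ← ENNReal.ofReal_sub _ hsub14]
          norm_num
  have hPE0c : P E0ᶜ ≤ ENNReal.ofReal (δ / 4) := by
    have h := herr0 (δ / 4) hδ4
    calc P E0ᶜ = 1 - P E0 := prob_compl_eq_one_sub hE0m
      _ ≤ 1 - ENNReal.ofReal (1 - δ / 4) := tsub_le_tsub_left h 1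
      _ = ENNReal.ofReal (δ / 4) := by
          rw [← ENNReal.ofReal_one, ← ENNReal.ofReal_sub _ hsub14]
          norm_num
  -- concentration event bounds
  have hexpL : 2 * ENNReal.ofReal (Real.exp (-2 * L)) = ENNReal.ofReal (δ ^ 2 / 8) := by
    have hEL : Real.exp L = 4 / δ := Real.exp_log h4δ
    have h1 : Real.exp (-2 * L) = δ ^ 2 / 16 := by
      rw [show (-2 : ℝ) * L = -(L + L) by ring, Real.exp_neg, Real.exp_add, hEL]
      field_simp
      ring
    rw [h1, two_mul, ← ENNReal.ofReal_add (by positivity) (by positivity)]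
    congr 1
    ring
  have hPC1 : P C1 ≤ ENNReal.ofReal (δ ^ 2 / 8) := by
    have h := concentration_event P hn M hMmeas hM01 πM hπM.1.le hπM.2.le hMber hMindep
      fhatR hfhatRmeas hfhatR_indep (fun i => f1 (x i)) e1 L he1 hL
    exact h.trans (le_of_eq hexpL)
  have hPC0 : P C0 ≤ ENNReal.ofReal (δ ^ 2 / 8) := by
    have h := concentration_event P hn Mb hMbmeas hMb01 πMb hπMb.1.le hπMb.2.le hMbber hMbindep
      fhatRb hfhatRbmeas hfhatRb_indep (fun i => f0 (x i)) e0 L he0 hL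
    exact h.trans (le_of_eq hexpL)
  -- the target event
  set G : Set Ω := {ω | Real.sqrt (n : ℝ) * |τdc ω - τora ω| ≤
      (e1 / πM + e0 / πMb) * Real.sqrt L} with hGdef
  have hGm : MeasurableSet G :=
    measurableSet_le ((hτdcm.sub hτoram).abs.const_mul _) measurable_const
  have h1pos : (0:ℝ) < 1 / ((n : ℝ) * πM) := by
    apply one_div_pos.mpr (mul_pos hn' hπM.1)
  have h0pos : (0:ℝ) < 1 / ((n : ℝ) * πMb) := by
    apply one_div_pos.mpr (mul_pos hn' hπMb.1)
  have hsself : Real.sqrt n * Real.sqrt n = (n : ℝ) := Real.mul_self_sqrt hn'.le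
  -- inclusion
  have hsub : Gᶜ ⊆ (E1ᶜ ∪ E0ᶜ) ∪ (C1 ∪ C0) := by
    intro ω hω
    simp only [hGdef, Set.mem_compl_iff, Set.mem_setOf_eq, not_le] at hω
    by_cases hA : ω ∈ E1
    swap
    · exact Or.inl (Or.inl hA)
    by_cases hB : ω ∈ E0
    swap
    · exact Or.inl (Or.inr hB)
    by_cases hc1 : Real.sqrt n * e1 * Real.sqrt L <
        |∑ i, (fhatR ω i - f1 (x i)) * (M i ω - πM)|
    · exact Or.inr (Or.inl ⟨hA, hc1⟩)
    by_cases hc0 : Real.sqrt n * e0 * Real.sqrt L <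
        |∑ i, (fhatRb ω i - f0 (x i)) * (Mb i ω - πMb)|
    · exact Or.inr (Or.inr ⟨hB, hc0⟩)
    exfalso
    push_neg at hc1 hc0
    set S1 : ℝ := ∑ i, (fhatR ω i - f1 (x i)) * (M i ω - πM) with hS1def
    set S0 : ℝ := ∑ i, (fhatRb ω i - f0 (x i)) * (Mb i ω - πMb) with hS0def
    have habs : |τdc ω - τora ω| ≤
        (1 / ((n : ℝ) * πM)) * |S1| + (1 / ((n : ℝ) * πMb)) * |S0| := by
      calc |τdc ω - τora ω|
          ≤ |(-(1 / ((n : ℝ) * πM))) * S1| + |(1 / ((n : ℝ) * πMb)) * S0| := by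
            rw [key ω]; exact abs_add_le _ _
        _ = (1 / ((n : ℝ) * πM)) * |S1| + (1 / ((n : ℝ) * πMb)) * |S0| := by
            rw [abs_mul, abs_mul, abs_neg, abs_of_pos h1pos, abs_of_pos h0pos]
    have hfin : Real.sqrt n * |τdc ω - τora ω| ≤ (e1 / πM + e0 / πMb) * Real.sqrt L := by
      have hstep : Real.sqrt n * |τdc ω - τora ω| ≤
          Real.sqrt n * ((1 / ((n : ℝ) * πM)) * (Real.sqrt n * e1 * Real.sqrt L)
            + (1 / ((n : ℝ) * πMb)) * (Real.sqrt n * e0 * Real.sqrt L)) := by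
        apply mul_le_mul_of_nonneg_left ?_ (Real.sqrt_nonneg _)
        refine habs.trans (add_le_add ?_ ?_)
        · exact mul_le_mul_of_nonneg_left hc1 h1pos.le
        · exact mul_le_mul_of_nonneg_left hc0 h0pos.le
      refine hstep.trans (le_of_eq ?_)
      calc Real.sqrt n * ((1 / ((n : ℝ) * πM)) * (Real.sqrt n * e1 * Real.sqrt L)
            + (1 / ((n : ℝ) * πMb)) * (Real.sqrt n * e0 * Real.sqrt L))
          = (Real.sqrt n * Real.sqrt n) * (e1 * Real.sqrt L / ((n : ℝ) * πM))
            + (Real.sqrt n * Real.sqrt n) * (e0 * Real.sqrt L / ((n : ℝ) * πMb)) := by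
            ring
        _ = (n : ℝ) * (e1 * Real.sqrt L / ((n : ℝ) * πM))
            + (n : ℝ) * (e0 * Real.sqrt L / ((n : ℝ) * πMb)) := by rw [hsself]
        _ = (e1 / πM + e0 / πMb) * Real.sqrt L := by
            field_simp
    exact absurd hfin (not_le.mpr hω)
  -- union bound and conclusion
  have hPGc : P Gᶜ ≤ ENNReal.ofReal δ := by
    calc P Gᶜ ≤ P ((E1ᶜ ∪ E0ᶜ) ∪ (C1 ∪ C0)) := measure_mono hsub
      _ ≤ P (E1ᶜ ∪ E0ᶜ) + P (C1 ∪ C0) := measure_union_le _ _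
      _ ≤ (P E1ᶜ + P E0ᶜ) + (P C1 + P C0) :=
          add_le_add (measure_union_le _ _) (measure_union_le _ _)
      _ ≤ (ENNReal.ofReal (δ / 4) + ENNReal.ofReal (δ / 4))
            + (ENNReal.ofReal (δ ^ 2 / 8) + ENNReal.ofReal (δ ^ 2 / 8)) :=
          add_le_add (add_le_add hPE1c hPE0c) (add_le_add hPC1 hPC0)
      _ = ENNReal.ofReal ((δ / 4 + δ / 4) + (δ ^ 2 / 8 + δ ^ 2 / 8)) := by
          rw [← ENNReal.ofReal_add (by positivity) (by positivity),
            ← ENNReal.ofReal_add (by positivity) (by positivity),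
            ← ENNReal.ofReal_add (by positivity) (by positivity)]
      _ ≤ ENNReal.ofReal δ := ENNReal.ofReal_le_ofReal (by nlinarith)
  calc ENNReal.ofReal (1 - δ) = 1 - ENNReal.ofReal δ := by
        rw [ENNReal.ofReal_sub 1 hδ0.le, ENNReal.ofReal_one]
    _ ≤ 1 - P Gᶜ := tsub_le_tsub_left hPGc 1
    _ = P G := by
        rw [prob_compl_eq_one_sub hGm, ENNReal.sub_sub_cancel ENNReal.one_ne_top prob_le_one]
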